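/- Let (Y_1,...,Y_n, A_1,...,A_n) be {0,1}-valued random variables with joint pmf p on a finite probability space, and suppose P(Y=y) > 0 for every y ∈ {0,1}^n. Assume that for each k, A_k is conditionally independent of the joint vector of all other variables (Y_j for j ≠ k and A_j for j ≠ k) given Y_k. Then for every a ∈ {0,1}^n: P(A_1=a_1,...,A_n=a_n) = Σ_{y ∈ {0,1}^n} P(Y=y) · Π_{k=1}^n P(A_k=a_k | Y_k=y_k). -/

import Mathlib

open Finset

namespace AnchorAux

variable {n : ℕ} (p : (Fin n → Bool) × (Fin n → Bool) → ℝ)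

/-- P(Y_k = b) -/
def Q (k : Fin n) (b : Bool) : ℝ :=
  ∑ y' : Fin n → Bool, ∑ a' : Fin n → Bool, if y' k = b then p (y', a') else 0

/-- P(Y_k = b, A_k = c) -/
def R (k : Fin n) (b c : Bool) : ℝ :=
  ∑ y' : Fin n → Bool, ∑ a' : Fin n → Bool, if y' k = b ∧ a' k = c then p (y', a') else 0

/-- P(Y = y, A_j = a_j for j ∉ S) -/
def f (S : Finset (Fin n)) (y a : Fin n → Bool) : ℝ :=
  ∑ a' : Fin n → Bool, if ∀ j ∉ S, a' j = a j then p (y, a') else 0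

lemma f_empty (y a : Fin n → Bool) : f p ∅ y a = p (y, a) := by
  unfold f
  have : ∀ a' : Fin n → Bool, (∀ j ∉ (∅ : Finset (Fin n)), a' j = a j) ↔ a' = a := by
    intro a'; simp [funext_iff]
  rw [Finset.sum_congr rfl (fun a' _ => by rw [if_congr (this a') rfl rfl])]
  simp

lemma f_univ (y a : Fin n → Bool) : f p univ y a = ∑ a' : Fin n → Bool, p (y, a') := by
  unfold f; simp

lemma Q_pos (hnn : ∀ ω, 0 ≤ p ω) (hY : ∀ y : Fin n → Bool, 0 < ∑ a : Fin n → Bool, p (y, a))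
    (k : Fin n) (b : Bool) : 0 < Q p k b := by
  unfold Q
  have h1 : ∀ y' : Fin n → Bool,
      0 ≤ ∑ a' : Fin n → Bool, if y' k = b then p (y', a') else 0 := by
    intro y'; apply Finset.sum_nonneg; intro a' _; split <;> simp [hnn]
  have h2 : (0:ℝ) < ∑ a' : Fin n → Bool, if (fun _ => b) k = b then p ((fun _ => b), a') else 0 := by
    simpa using hY (fun _ => b)
  calc (0:ℝ) < _ := h2
    _ ≤ _ := Finset.single_le_sum (fun y' _ => h1 y') (Finset.mem_univ (fun _ => b))

end AnchorAux

namespace AnchorAux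

lemma base {n : ℕ} (p : (Fin n → Bool) × (Fin n → Bool) → ℝ)
    (hnn : ∀ ω, 0 ≤ p ω) (hY : ∀ y : Fin n → Bool, 0 < ∑ a : Fin n → Bool, p (y, a))
    (hCI : ∀ (k : Fin n) (y a : Fin n → Bool),
      p (y, a) /
          (∑ y' : Fin n → Bool, ∑ a' : Fin n → Bool,
            if y' k = y k then p (y', a') else 0) =
        ((∑ y' : Fin n → Bool, ∑ a' : Fin n → Bool,
            if y' k = y k ∧ a' k = a k then p (y', a') else 0) /
          (∑ y' : Fin n → Bool, ∑ a' : Fin n → Bool,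
            if y' k = y k then p (y', a') else 0)) *
        ((∑ c : Bool, p (y, Function.update a k c)) /
          (∑ y' : Fin n → Bool, ∑ a' : Fin n → Bool,
            if y' k = y k then p (y', a') else 0)))
    (k : Fin n) (y a : Fin n → Bool) :
    p (y, a) * Q p k (y k) =
      R p k (y k) (a k) * (∑ c : Bool, p (y, Function.update a k c)) := by
  have hQ : Q p k (y k) ≠ 0 := ne_of_gt (Q_pos p hnn hY k (y k))
  have h : p (y, a) / Q p k (y k) =
      (R p k (y k) (a k) / Q p k (y k)) *
        ((∑ c : Bool, p (y, Function.update a k c)) / Q p k (y k)) := hCI k y a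
  field_simp at h
  rw [Fintype.sum_bool]
  apply mul_right_cancel₀ hQ
  rw [Fintype.sum_bool] at h
  linear_combination Q p k (y k) * h

end AnchorAux

namespace AnchorAux

lemma key_reindex {n : ℕ} (p : (Fin n → Bool) × (Fin n → Bool) → ℝ)
    (k : Fin n) (S : Finset (Fin n)) (hk : k ∉ S) (y a : Fin n → Bool) :
    (∑ a' : Fin n → Bool,
        if ∀ j ∉ S, a' j = a j then (∑ c : Bool, p (y, Function.update a' k c)) else 0)
      = f p (insert k S) y a := by
  have e1 : ∀ a' : Fin n → Bool,
      (if ∀ j ∉ S, a' j = a j then (∑ c : Bool, p (y, Function.update a' k c)) else 0)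
        = ∑ c : Bool, if ∀ j ∉ S, a' j = a j then p (y, Function.update a' k c) else 0 := by
    intro a'; split <;> simp
  have hm : Function.Involutive
      (fun x : (Fin n → Bool) × Bool => (Function.update x.1 k x.2, x.1 k)) := by
    intro x
    simp [Function.update_idem]
  set F : (Fin n → Bool) × Bool → ℝ :=
    fun x => if ∀ j ∉ S, x.1 j = a j then p (y, Function.update x.1 k x.2) else 0 with hF
  set G : (Fin n → Bool) × Bool → ℝ :=
    fun x => if ∀ j ∉ S, Function.update x.1 k x.2 j = a j then p (y, x.1) else 0 with hG
  have hFG : ∀ x, F x = G (hm.toPerm _ x) := by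
    intro x
    simp only [hF, hG, Function.Involutive.coe_toPerm]
    simp [Function.update_idem]
  have hiff : ∀ (a'' : Fin n → Bool) (d : Bool),
      (∀ j ∉ S, Function.update a'' k d j = a j) ↔
        (d = a k ∧ ∀ j ∉ insert k S, a'' j = a j) := by
    intro a'' d
    constructor
    · intro h
      refine ⟨by simpa using h k hk, fun j hj => ?_⟩
      rw [Finset.mem_insert, not_or] at hj
      have hj' := h j hj.2
      rwa [Function.update_of_ne hj.1] at hj'
    · rintro ⟨hd, h⟩ j hj
      by_cases hjk : j = k
      · subst hjk; simp [hd]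
      · rw [Function.update_of_ne hjk]
        exact h j (by simp [hjk, hj])
  calc (∑ a' : Fin n → Bool,
        if ∀ j ∉ S, a' j = a j then (∑ c : Bool, p (y, Function.update a' k c)) else 0)
      = ∑ a' : Fin n → Bool, ∑ c : Bool, F (a', c) :=
        Finset.sum_congr rfl (fun a' _ => e1 a')
    _ = ∑ x : (Fin n → Bool) × Bool, F x := (Fintype.sum_prod_type F).symm
    _ = ∑ x : (Fin n → Bool) × Bool, G (hm.toPerm _ x) :=
        Finset.sum_congr rfl (fun x _ => hFG x)
    _ = ∑ x : (Fin n → Bool) × Bool, G x := Equiv.sum_comp (hm.toPerm _) G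
    _ = ∑ a'' : Fin n → Bool, ∑ d : Bool, G (a'', d) := Fintype.sum_prod_type G
    _ = f p (insert k S) y a := by
        unfold f
        refine Finset.sum_congr rfl fun a'' _ => ?_
        calc (∑ d : Bool, G (a'', d))
            = ∑ d : Bool, if d = a k then
                (if ∀ j ∉ insert k S, a'' j = a j then p (y, a'') else 0) else 0 := by
              refine Finset.sum_congr rfl fun d _ => ?_
              simp only [hG]
              rw [if_congr (hiff a'' d) rfl rfl, ite_and]
          _ = (if ∀ j ∉ insert k S, a'' j = a j then p (y, a'') else 0) := by
              rw [Finset.sum_ite_eq' Finset.univ (a k)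
                (fun _ => if ∀ j ∉ insert k S, a'' j = a j then p (y, a'') else 0)]
              simp

end AnchorAux

namespace AnchorAux

lemma step {n : ℕ} (p : (Fin n → Bool) × (Fin n → Bool) → ℝ)
    (hbase : ∀ (k : Fin n) (y a : Fin n → Bool),
      p (y, a) * Q p k (y k) =
        R p k (y k) (a k) * (∑ c : Bool, p (y, Function.update a k c)))
    (k : Fin n) (S : Finset (Fin n)) (hk : k ∉ S) (y a : Fin n → Bool) :
    Q p k (y k) * f p S y a = R p k (y k) (a k) * f p (insert k S) y a := by
  have main : ∀ a' : Fin n → Bool,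
      Q p k (y k) * (if ∀ j ∉ S, a' j = a j then p (y, a') else 0)
        = R p k (y k) (a k) *
            (if ∀ j ∉ S, a' j = a j then (∑ c : Bool, p (y, Function.update a' k c)) else 0) := by
    intro a'
    by_cases h : ∀ j ∉ S, a' j = a j
    · rw [if_pos h, if_pos h, mul_comm (Q p k (y k)), hbase k y a', h k hk]
    · rw [if_neg h, if_neg h, mul_zero, mul_zero]
  calc Q p k (y k) * f p S y a
      = ∑ a' : Fin n → Bool,
          Q p k (y k) * (if ∀ j ∉ S, a' j = a j then p (y, a') else 0) := by
        rw [f, Finset.mul_sum]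
    _ = ∑ a' : Fin n → Bool, R p k (y k) (a k) *
          (if ∀ j ∉ S, a' j = a j then (∑ c : Bool, p (y, Function.update a' k c)) else 0) :=
        Finset.sum_congr rfl (fun a' _ => main a')
    _ = R p k (y k) (a k) * ∑ a' : Fin n → Bool,
          (if ∀ j ∉ S, a' j = a j then (∑ c : Bool, p (y, Function.update a' k c)) else 0) :=
        (Finset.mul_sum _ _ _).symm
    _ = R p k (y k) (a k) * f p (insert k S) y a := by rw [key_reindex p k S hk y a]

lemma prods {n : ℕ} (p : (Fin n → Bool) × (Fin n → Bool) → ℝ)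
    (hbase : ∀ (k : Fin n) (y a : Fin n → Bool),
      p (y, a) * Q p k (y k) =
        R p k (y k) (a k) * (∑ c : Bool, p (y, Function.update a k c)))
    (y a : Fin n → Bool) (S : Finset (Fin n)) :
    p (y, a) * ∏ k ∈ S, Q p k (y k) = f p S y a * ∏ k ∈ S, R p k (y k) (a k) := by
  induction S using Finset.induction_on with
  | empty => simp [f_empty]
  | @insert k S hk ih =>
    rw [Finset.prod_insert hk, Finset.prod_insert hk]
    have h1 := step p hbase k S hk y a
    linear_combination Q p k (y k) * ih + (∏ j ∈ S, R p j (y j) (a j)) * h1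

end AnchorAux



/-- Anchored moments identity: if each `A k` is conditionally independent of all
other variables given `Y k`, then the joint distribution of the anchors is the
mixture `∑_y P(Y=y) ∏_k P(A_k = a_k | Y_k = y_k)`. -/
theorem anchor_moments (n : ℕ) (p : (Fin n → Bool) × (Fin n → Bool) → ℝ)
    (hnn : ∀ ω, 0 ≤ p ω) (hsum : ∑ ω, p ω = 1)
    (hY : ∀ y : Fin n → Bool, 0 < ∑ a : Fin n → Bool, p (y, a))
    (hCI : ∀ (k : Fin n) (y a : Fin n → Bool),
      p (y, a) /
          (∑ y' : Fin n → Bool, ∑ a' : Fin n → Bool,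
            if y' k = y k then p (y', a') else 0) =
        ((∑ y' : Fin n → Bool, ∑ a' : Fin n → Bool,
            if y' k = y k ∧ a' k = a k then p (y', a') else 0) /
          (∑ y' : Fin n → Bool, ∑ a' : Fin n → Bool,
            if y' k = y k then p (y', a') else 0)) *
        ((∑ c : Bool, p (y, Function.update a k c)) /
          (∑ y' : Fin n → Bool, ∑ a' : Fin n → Bool,
            if y' k = y k then p (y', a') else 0))) :
    ∀ a : Fin n → Bool,
      (∑ y : Fin n → Bool, p (y, a)) =
        ∑ y : Fin n → Bool, (∑ a' : Fin n → Bool, p (y, a')) *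
          ∏ k : Fin n,
            ((∑ y' : Fin n → Bool, ∑ a' : Fin n → Bool,
                if y' k = y k ∧ a' k = a k then p (y', a') else 0) /
              (∑ y' : Fin n → Bool, ∑ a' : Fin n → Bool,
                if y' k = y k then p (y', a') else 0)) := by
  intro a
  have hbase := AnchorAux.base p hnn hY hCI
  refine Finset.sum_congr rfl fun y _ => ?_
  have hQprod : (∏ k : Fin n, AnchorAux.Q p k (y k)) ≠ 0 :=
    ne_of_gt (Finset.prod_pos fun k _ => AnchorAux.Q_pos p hnn hY k (y k))
  have h := AnchorAux.prods p hbase y a Finset.univ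
  rw [AnchorAux.f_univ] at h
  have goal' : p (y, a) =
      (∑ a' : Fin n → Bool, p (y, a')) *
        ∏ k : Fin n, AnchorAux.R p k (y k) (a k) / AnchorAux.Q p k (y k) := by
    rw [Finset.prod_div_distrib, ← mul_div_assoc, eq_div_iff hQprod]
    linear_combination h
  exact goal'
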